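/- arXiv:2004.10908 — 4 statements merged into one kernel-verified Lean document; each statement's English description precedes it below -/
import Mathlib

section
/- Consider the scheduler state machine for a single domain with n workers, where each worker is in one of three states: active, thief, or sleeping, and transitions obey: (i) a worker becoming active when it was the last thief wakes one sleeping worker into the thief state (if any sleeping worker exists); (ii) a worker only goes to sleep if it is not the last thief or no active worker exists. Then the invariant holds: whenever at least one worker is active and at least one worker is not active, at least one worker is in the thief state. -/
/-- Transition system for the single-domain worker-management protocol on
configurations `(a, t, s)` = (#active, #thieves, #sleepers):
* `activate`: a thief becomes active (`t ≥ 2`);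
* `activateLastWake`: the last thief becomes active and wakes one sleeper
  into the thief state (`t = 1`, `s ≥ 1`);
* `activateLastNoSleeper`: the last thief becomes active, no sleeper to wake;
* `deactivate`: an active worker becomes a thief;
* `sleep`: a thief goes to sleep, allowed only if it is not the last thief
  (`t ≥ 2`) or no active worker exists (`a = 0`). -/
inductive WSStep : ℕ × ℕ × ℕ → ℕ × ℕ × ℕ → Prop
  | activate {a t s : ℕ} (h : 2 ≤ t) : WSStep (a, t, s) (a + 1, t - 1, s)
  | activateLastWake {a s : ℕ} (h : 1 ≤ s) : WSStep (a, 1, s) (a + 1, 1, s - 1)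
  | activateLastNoSleeper {a : ℕ} : WSStep (a, 1, 0) (a + 1, 0, 0)
  | deactivate {a t s : ℕ} (h : 1 ≤ a) : WSStep (a, t, s) (a - 1, t + 1, s)
  | sleep {a t s : ℕ} (h1 : 1 ≤ t) (h2 : 2 ≤ t ∨ a = 0) :
      WSStep (a, t, s) (a, t - 1, s + 1)

def WSInv (n : ℕ) (c : ℕ × ℕ × ℕ) : Prop :=
  c.1 + c.2.1 + c.2.2 = n ∧ (1 ≤ c.1 → 1 ≤ c.2.1 ∨ c.2.2 = 0)

lemma WSInv_step {n : ℕ} {c d : ℕ × ℕ × ℕ} (h : WSStep c d) (hc : WSInv n c) :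
    WSInv n d := by
  obtain ⟨hsum, himp⟩ := hc
  cases h with
  | activate h => constructor <;> simp_all <;> omega
  | activateLastWake h => constructor <;> simp_all <;> omega
  | activateLastNoSleeper => constructor <;> simp_all <;> omega
  | deactivate h => constructor <;> simp_all <;> omega
  | sleep h1 h2 => constructor <;> simp_all <;> omega

lemma WSInv_reach {n : ℕ} {c : ℕ × ℕ × ℕ}
    (h : Relation.ReflTransGen WSStep (0, n, 0) c) : WSInv n c := by
  induction h with
  | refl => exact ⟨by simp, by simp⟩
  | tail _ hstep ih => exact WSInv_step hstep ih

/-- Lemma 1 of the Taskflow paper: starting from the configuration in which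
all `n` workers are thieves, in every reachable configuration, whenever at
least one worker is active and not all workers are active, at least one worker
is in the thief state. -/
theorem stmt_6 (n : ℕ) (a t s : ℕ)
    (hreach : Relation.ReflTransGen WSStep (0, n, 0) (a, t, s))
    (hactive : 1 ≤ a) (hnotall : a < n) :
    1 ≤ t := by
  obtain ⟨hsum, himp⟩ := WSInv_reach hreach
  simp only at hsum himp
  rcases himp hactive with h | h <;> omega
end

section
/- Under the invariant 'whenever an active worker exists and not all workers are active, at least one worker is a thief', and assuming every thief with a nonempty stealable task pool eventually succeeds in a steal and becomes active (waking another thief), the number of active workers increases monotonically (one by one) until either all workers are active or the number of active workers equals the number of available tasks. Hence the system never reaches a stable state in which unexecuted available tasks exist while some worker sleeps. -/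
/-- Transition system on configurations `(a, t, s, m)` = (#active, #thieves,
#sleepers, #pending available tasks):
* `steal` variants: a thief steals a task and becomes active (requires
  `t ≥ 1`, `m ≥ 1`), decrementing `m`; the last thief wakes a sleeper into the
  thief state if one exists (wake-up rule), so `t' ≥ 1` whenever `s'` allows;
* `deactivate`: an active worker becomes a thief;
* `sleep`: a thief goes to sleep if it is not the last thief or no active
  worker exists. -/
inductive WSStep7 : ℕ × ℕ × ℕ × ℕ → ℕ × ℕ × ℕ × ℕ → Prop
  | steal {a t s m : ℕ} (ht : 2 ≤ t) (hm : 1 ≤ m) :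
      WSStep7 (a, t, s, m) (a + 1, t - 1, s, m - 1)
  | stealLastWake {a s m : ℕ} (hs : 1 ≤ s) (hm : 1 ≤ m) :
      WSStep7 (a, 1, s, m) (a + 1, 1, s - 1, m - 1)
  | stealLastNoSleeper {a m : ℕ} (hm : 1 ≤ m) :
      WSStep7 (a, 1, 0, m) (a + 1, 0, 0, m - 1)
  | deactivate {a t s m : ℕ} (h : 1 ≤ a) :
      WSStep7 (a, t, s, m) (a - 1, t + 1, s, m)
  | sleep {a t s m : ℕ} (h1 : 1 ≤ t) (h2 : 2 ≤ t ∨ a = 0) :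
      WSStep7 (a, t, s, m) (a, t - 1, s + 1, m)

lemma wss7_sum {x y : ℕ × ℕ × ℕ × ℕ} (h : WSStep7 x y) :
    y.1 + y.2.1 + y.2.2.1 = x.1 + x.2.1 + x.2.2.1 := by
  cases h <;> simp <;> omega

lemma wss7_m_le {x y : ℕ × ℕ × ℕ × ℕ} (h : WSStep7 x y) :
    y.2.2.2 ≤ x.2.2.2 := by
  cases h <;> simp <;> omega

lemma wss7_steal_char {x y : ℕ × ℕ × ℕ × ℕ} (h : WSStep7 x y)
    (hlt : y.2.2.2 < x.2.2.2) : 1 ≤ y.2.1 ∨ (y.2.1 = 0 ∧ y.2.2.1 = 0) := by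
  cases h <;> simp_all <;> omega

/-- Theorem 2 of the Taskflow paper (no under-subscription): starting with all
`n` workers as thieves and `m₀` available tasks, along every maximal execution
(each step is a transition or a stutter) that is fair — whenever tasks are
pending and a thief exists, a steal (which decrements `m`) eventually fires —
the system reaches a state where all workers are active or no pending tasks
remain; it never remains forever with unexecuted available tasks while some
worker sleeps. -/
theorem stmt_7 (n m₀ : ℕ) (seq : ℕ → ℕ × ℕ × ℕ × ℕ)
    (h0 : seq 0 = (0, n, 0, m₀))
    (hstep : ∀ i, WSStep7 (seq i) (seq (i + 1)) ∨ seq (i + 1) = seq i)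
    (hfair : ∀ i, 1 ≤ (seq i).2.2.2 → 1 ≤ (seq i).2.1 →
      ∃ j, i ≤ j ∧ (seq (j + 1)).2.2.2 < (seq j).2.2.2) :
    ∃ k, (seq k).1 = n ∨ (seq k).2.2.2 = 0 := by
  by_contra h
  push_neg at h
  have ha : ∀ k, (seq k).1 ≠ n := fun k => (h k).1
  have hm : ∀ k, 1 ≤ (seq k).2.2.2 := fun k => Nat.one_le_iff_ne_zero.2 (h k).2
  have hinv : ∀ i, (seq i).1 + (seq i).2.1 + (seq i).2.2.1 = n := by
    intro i; induction i with
    | zero => simp [h0]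
    | succ i ih =>
      rcases hstep i with hs | hs
      · rw [wss7_sum hs]; exact ih
      · rw [hs]; exact ih
  have hmono : ∀ i j, i ≤ j → (seq j).2.2.2 ≤ (seq i).2.2.2 := by
    intro i j hij
    induction j, hij using Nat.le_induction with
    | base => exact le_rfl
    | succ j hij ih =>
      rcases hstep j with hs | hs
      · exact le_trans (wss7_m_le hs) ih
      · rw [hs]; exact ih
  have hn : 1 ≤ n := by
    by_contra hn
    exact ha 0 (by simp [h0]; omega)
  have key : ∀ M i, (seq i).2.2.2 ≤ M → 1 ≤ (seq i).2.1 → False := by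
    intro M
    induction M using Nat.strong_induction_on with
    | _ M ih =>
      intro i hle ht
      obtain ⟨j, hij, hdec⟩ := hfair i (hm i) ht
      rcases hstep j with hs | hs
      · rcases wss7_steal_char hs hdec with ht' | ⟨h1, h2⟩
        · exact ih (seq (j+1)).2.2.2
            (lt_of_lt_of_le hdec (le_trans (hmono i j hij) hle)) (j+1) le_rfl ht'
        · have := hinv (j+1); exact ha (j+1) (by omega)
      · rw [hs] at hdec; omega
  have ht0 : 1 ≤ (seq 0).2.1 := by rw [h0]; exact hn
  exact key (seq 0).2.2.2 0 le_rfl ht0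
end

section
/- In a two-phase-commit wait protocol, if a waiter executes prepare_wait, then re-checks a predicate P, and commits to wait only if P is still false, while every notifier first sets P to true and then issues a notification, then it is impossible for the waiter to block forever while P is true: either the waiter observes P true during the re-check and cancels, or the notification (issued after prepare_wait) wakes the committed waiter. -/
/-- Two-phase-commit wait protocol: events are indexed by global time points.
The waiter executes `prepare_wait` at time `tprep`, re-checks the monotone
predicate `P` at time `tcheck > tprep`, and commits to wait iff `P` is still
false at the re-check.  The notifier sets `P` to true at time `tset` and then
issues its notification at time `tnotify > tset`.  The 2PC guarantee is that
any notification issued after the waiter's `prepare_wait` wakes a committed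
waiter.  Then the waiter cannot block forever: either it observes `P` true
during the re-check and cancels (does not commit), or it is woken. -/
theorem stmt_12 (P : ℕ → Prop)
    (hmono : ∀ i j, i ≤ j → P i → P j)
    (tprep tcheck tset tnotify : ℕ)
    (commits woken : Prop)
    (horder : tprep < tcheck)
    (hnotifier : tset < tnotify)
    (hset : P tset)
    (hcommit : commits ↔ ¬ P tcheck)
    (h2pc : commits → tprep < tnotify → woken) :
    ¬ commits ∨ woken := by
  by_cases hc : commits
  · right
    have hnp : ¬ P tcheck := hcommit.mp hc
    have hlt : tcheck < tset := by
      by_contra h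
      exact hnp (hmono tset tcheck (le_of_not_gt h) hset)
    exact h2pc hc (by omega)
  · exact Or.inl hc
end

section
/- Consider a system of n workers where each worker's state is active (A), stealing (T), or sleeping (S), with the following notification rule: a worker transitioning to A from T, when it was the last worker in T, sends a wake-up; and an external task submission when actives = 0 and thieves = 0 sends a wake-up. Suppose wake-ups are never lost for workers between prepare_wait and commit_wait (2PC guarantee). Then in every reachable configuration with at least one pending task, it is not the case that all n workers are permanently in S. -/
/-- Transition system for task-submission correctness (Theorem 1 of the
Taskflow paper), on configurations `(a, t, s, m)` = (#active, #thieves,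
#sleepers, #pending tasks):
* `submitNoWake`: an external submission increments `m` (no wake-up needed
  when some worker is active or stealing);
* `submitWake`: a submission when `a = t = 0` wakes one sleeper into the
  thief state (2PC guarantee: the wake-up is not lost);
* `steal` variants: a thief takes a pending task and becomes active; the last
  thief wakes a sleeper if one exists;
* `deactivate`: an active worker becomes a thief;
* `sleep`: a thief may go to sleep only after the re-check guard observes no
  pending task (`m = 0`); if `m ≥ 1` it cancels and stays a thief. -/
inductive WSStep13 : ℕ × ℕ × ℕ × ℕ → ℕ × ℕ × ℕ × ℕ → Prop
  | submitNoWake {a t s m : ℕ} (h : 1 ≤ a ∨ 1 ≤ t) :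
      WSStep13 (a, t, s, m) (a, t, s, m + 1)
  | submitWake {s m : ℕ} (hs : 1 ≤ s) :
      WSStep13 (0, 0, s, m) (0, 1, s - 1, m + 1)
  | steal {a t s m : ℕ} (ht : 2 ≤ t) (hm : 1 ≤ m) :
      WSStep13 (a, t, s, m) (a + 1, t - 1, s, m - 1)
  | stealLastWake {a s m : ℕ} (hs : 1 ≤ s) (hm : 1 ≤ m) :
      WSStep13 (a, 1, s, m) (a + 1, 1, s - 1, m - 1)
  | stealLastNoSleeper {a m : ℕ} (hm : 1 ≤ m) :
      WSStep13 (a, 1, 0, m) (a + 1, 0, 0, m - 1)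
  | deactivate {a t s m : ℕ} (h : 1 ≤ a) :
      WSStep13 (a, t, s, m) (a - 1, t + 1, s, m)
  | sleep {a t s m : ℕ} (ht : 1 ≤ t) (hm : m = 0) :
      WSStep13 (a, t, s, m) (a, t - 1, s + 1, m)

/-- Starting from all `n` workers as thieves with no pending task, no
reachable configuration has a pending task while all workers sleep: whenever
`m ≥ 1`, some worker is active or stealing (so it is never the case that all
`n` workers are permanently sleeping with a pending task). -/
theorem stmt_13 (n : ℕ) (a t s m : ℕ)
    (hreach : Relation.ReflTransGen WSStep13 (0, n, 0, 0) (a, t, s, m))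
    (hm : 1 ≤ m) :
    1 ≤ a ∨ 1 ≤ t := by
  suffices h : ∀ c : ℕ × ℕ × ℕ × ℕ,
      Relation.ReflTransGen WSStep13 (0, n, 0, 0) c →
      (1 ≤ c.2.2.2 → 1 ≤ c.1 ∨ 1 ≤ c.2.1) by
    exact h (a, t, s, m) hreach hm
  intro c hc
  induction hc with
  | refl => intro h; simp at h
  | tail _ hstep ih =>
    intro hm'
    cases hstep with
    | submitNoWake h => exact h
    | submitWake hs => right; exact le_refl 1
    | steal ht hm => left; omega
    | stealLastWake hs hm => left; omega
    | stealLastNoSleeper hm => left; omega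
    | deactivate h => right; simp
    | sleep ht hm => simp at hm'; omega
end
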